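/- Let S be a Hilbert space and (Φ_k)_{k≥1} a family in S. Suppose S decomposes via a family of finite blocks S_n (n in an index set N) such that: (a) there is C₁ ≥ 1 with C₁⁻¹(|u|²+|v|²) ≤ ‖uΦ_{2n+1}+vΦ_{2n+2}‖² ≤ C₁(|u|²+|v|²) for all n and scalars u,v; and (b) there is C₂ > 0 with |⟨U_n, U_{n+m}⟩| ≤ C₂‖U_n‖‖U_{n+m}‖/(nm) for all U_n ∈ S_n, U_{n+m} ∈ S_{n+m}, m ≥ 1. Then for any sequence U_n ∈ S_n with Σ‖U_n‖² < ∞, the series ΣU_n converges in S and ‖Σ_{n≥N} U_n‖² differs from Σ_{n≥N}‖U_n‖² by at most C₂' (Σ_{n≥N} 1/n²)^{1/2} Σ_{n≥N}‖U_n‖² for a constant C₂' depending only on C₂. -/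

import Mathlib

open Finset Filter Topology

private lemma sum_inv_sqrt (M : ℕ) :
    ∑ i ∈ Finset.range M, 1 / Real.sqrt ((i : ℝ) + 1) ≤ 2 * Real.sqrt M := by
  induction M with
  | zero => simp
  | succ M ih =>
    rw [Finset.sum_range_succ]
    have h2 : 0 < Real.sqrt ((M : ℝ) + 1) := Real.sqrt_pos.2 (by positivity)
    have h3 : Real.sqrt ((M : ℝ) + 1) ^ 2 = (M : ℝ) + 1 := Real.sq_sqrt (by positivity)
    have h4 : Real.sqrt (M : ℝ) ^ 2 = (M : ℝ) := Real.sq_sqrt (by positivity)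
    have key : 1 / Real.sqrt ((M : ℝ) + 1)
        ≤ 2 * Real.sqrt (((M : ℕ) + 1 : ℕ) : ℝ) - 2 * Real.sqrt (M : ℝ) := by
      have hc : (((M : ℕ) + 1 : ℕ) : ℝ) = (M : ℝ) + 1 := by push_cast; ring
      rw [hc, div_le_iff₀ h2]
      nlinarith [sq_nonneg (Real.sqrt ((M : ℝ) + 1) - Real.sqrt (M : ℝ)),
        Real.sqrt_nonneg (M : ℝ)]
    push_cast at key ⊢
    linarith

private lemma sum_inv_pow32 (M : ℕ) :
    ∑ i ∈ Finset.range M, 1 / (((i : ℝ) + 1) * Real.sqrt ((i : ℝ) + 1)) ≤ 3 := by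
  have main : ∀ M : ℕ, 1 ≤ M →
      ∑ i ∈ Finset.range M, 1 / (((i : ℝ) + 1) * Real.sqrt ((i : ℝ) + 1))
        ≤ 3 - 2 / Real.sqrt M := by
    intro M hM
    induction M, hM using Nat.le_induction with
    | base => norm_num
    | succ M hM ih =>
      rw [Finset.sum_range_succ]
      set s := Real.sqrt (M : ℝ) with hs
      set t := Real.sqrt ((M : ℝ) + 1) with ht
      have hMR : (1 : ℝ) ≤ (M : ℝ) := by exact_mod_cast hM
      have hspos : 0 < s := Real.sqrt_pos.2 (by linarith)
      have htpos : 0 < t := Real.sqrt_pos.2 (by linarith)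
      have hs2 : s ^ 2 = (M : ℝ) := Real.sq_sqrt (by linarith)
      have ht2 : t ^ 2 = (M : ℝ) + 1 := Real.sq_sqrt (by linarith)
      have hst : s ≤ t := Real.sqrt_le_sqrt (by linarith)
      have hts : (t - s) * (t + s) = 1 := by nlinarith
      have h1 : s * t * (t + s) ≤ 2 * t ^ 3 := by nlinarith
      have key : 1 / (((M : ℝ) + 1) * t) ≤ 2 / s - 2 / t := by
        rw [div_sub_div _ _ hspos.ne' htpos.ne', div_le_div_iff₀ (by positivity) (by positivity)]
        calc 1 * (s * t) = s * t * ((t - s) * (t + s)) := by rw [hts]; ring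
          _ = s * t * (t + s) * (t - s) := by ring
          _ ≤ 2 * t ^ 3 * (t - s) := by
              apply mul_le_mul_of_nonneg_right h1 (by linarith)
          _ = (2 * t - s * 2) * (((M : ℝ) + 1) * t) := by rw [← ht2]; ring
      have hc : Real.sqrt (((M : ℕ) + 1 : ℕ) : ℝ) = t := by push_cast; rfl
      push_cast [hc]
      linarith [ih]
  rcases Nat.eq_zero_or_pos M with h | h
  · simp [h]
  · have := main M h
    have : 0 ≤ 2 / Real.sqrt (M : ℝ) := by positivity
    linarith [main M h]

private lemma my_sqrt_add_le {x y : ℝ} (hx : 0 ≤ x) (hy : 0 ≤ y) :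
    Real.sqrt (x + y) ≤ Real.sqrt x + Real.sqrt y := by
  rw [Real.sqrt_le_iff]
  constructor
  · positivity
  · nlinarith [Real.sq_sqrt hx, Real.sq_sqrt hy, Real.sqrt_nonneg x, Real.sqrt_nonneg y]


private lemma sum_Ico_inv_sqrt (k : ℕ) :
    ∑ j ∈ Finset.Ico 1 k, 1 / Real.sqrt (j : ℝ) ≤ 2 * Real.sqrt (k : ℝ) := by
  rw [Finset.sum_Ico_eq_sum_range]
  have he : ∀ i ∈ Finset.range (k - 1),
      1 / Real.sqrt ((1 + i : ℕ) : ℝ) = 1 / Real.sqrt ((i : ℝ) + 1) := by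
    intro i _; congr 2; push_cast; ring
  rw [Finset.sum_congr rfl he]
  calc ∑ i ∈ Finset.range (k - 1), 1 / Real.sqrt ((i : ℝ) + 1)
      ≤ 2 * Real.sqrt ((k - 1 : ℕ) : ℝ) := sum_inv_sqrt _
    _ ≤ 2 * Real.sqrt (k : ℝ) := by
        have h0 : ((k - 1 : ℕ) : ℝ) ≤ (k : ℝ) := by
          have := Nat.sub_le k 1; exact_mod_cast this
        linarith [Real.sqrt_le_sqrt h0]

private lemma conv_bound (k : ℕ) :
    ∑ j ∈ Finset.Ico 1 k, 1 / (Real.sqrt (j : ℝ) * Real.sqrt ((k - j : ℕ) : ℝ)) ≤ 4 := by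
  rcases Nat.eq_zero_or_pos k with rfl | hk
  · simp
  have hkpos : (0 : ℝ) < (k : ℝ) := by exact_mod_cast hk
  have hks : 0 < Real.sqrt (k : ℝ) := Real.sqrt_pos.2 hkpos
  have hpt : ∀ j ∈ Finset.Ico 1 k,
      1 / (Real.sqrt (j : ℝ) * Real.sqrt ((k - j : ℕ) : ℝ))
        ≤ 1 / Real.sqrt (k : ℝ) * (1 / Real.sqrt (j : ℝ) + 1 / Real.sqrt ((k - j : ℕ) : ℝ)) := by
    intro j hj
    rw [Finset.mem_Ico] at hj
    have hx : (1 : ℝ) ≤ (j : ℝ) := by exact_mod_cast hj.1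
    have hy : (1 : ℝ) ≤ ((k - j : ℕ) : ℝ) := by
      have h1 : 1 ≤ k - j := by omega
      exact_mod_cast h1
    have hsum : (j : ℝ) + ((k - j : ℕ) : ℝ) = (k : ℝ) := by
      have h1 : j + (k - j) = k := by omega
      exact_mod_cast h1
    have hxs : 0 < Real.sqrt (j : ℝ) := Real.sqrt_pos.2 (by linarith)
    have hys : 0 < Real.sqrt ((k - j : ℕ) : ℝ) := Real.sqrt_pos.2 (by linarith)
    have hadd : Real.sqrt (k : ℝ) ≤ Real.sqrt (j : ℝ) + Real.sqrt ((k - j : ℕ) : ℝ) := by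
      rw [← hsum]; exact my_sqrt_add_le (by linarith) (by linarith)
    have he : 1 / Real.sqrt (k : ℝ) * (1 / Real.sqrt (j : ℝ) + 1 / Real.sqrt ((k - j : ℕ) : ℝ))
        = (Real.sqrt (j : ℝ) + Real.sqrt ((k - j : ℕ) : ℝ))
          / (Real.sqrt (k : ℝ) * (Real.sqrt (j : ℝ) * Real.sqrt ((k - j : ℕ) : ℝ))) := by
      field_simp; ring
    rw [he, div_le_div_iff₀ (by positivity) (by positivity)]
    nlinarith [mul_le_mul_of_nonneg_right hadd (le_of_lt (mul_pos hxs hys))]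
  calc ∑ j ∈ Finset.Ico 1 k, 1 / (Real.sqrt (j : ℝ) * Real.sqrt ((k - j : ℕ) : ℝ))
      ≤ ∑ j ∈ Finset.Ico 1 k,
          1 / Real.sqrt (k : ℝ) * (1 / Real.sqrt (j : ℝ) + 1 / Real.sqrt ((k - j : ℕ) : ℝ)) :=
        Finset.sum_le_sum hpt
    _ = 1 / Real.sqrt (k : ℝ) * ((∑ j ∈ Finset.Ico 1 k, 1 / Real.sqrt (j : ℝ))
          + ∑ j ∈ Finset.Ico 1 k, 1 / Real.sqrt ((k - j : ℕ) : ℝ)) := by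
        rw [← Finset.mul_sum, Finset.sum_add_distrib]
    _ = 1 / Real.sqrt (k : ℝ) * ((∑ j ∈ Finset.Ico 1 k, 1 / Real.sqrt (j : ℝ))
          + ∑ j ∈ Finset.Ico 1 k, 1 / Real.sqrt (j : ℝ)) := by
        congr 1
        congr 1
        refine Finset.sum_nbij' (fun j => k - j) (fun j => k - j) ?_ ?_ ?_ ?_ ?_
        · intro a ha; rw [Finset.mem_Ico] at ha ⊢; omega
        · intro a ha; rw [Finset.mem_Ico] at ha ⊢; omega
        · intro a ha; rw [Finset.mem_Ico] at ha; omega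
        · intro a ha; rw [Finset.mem_Ico] at ha; omega
        · intro a ha; dsimp only
    _ ≤ 1 / Real.sqrt (k : ℝ) * (2 * Real.sqrt (k : ℝ) + 2 * Real.sqrt (k : ℝ)) := by
        have h := sum_Ico_inv_sqrt k
        have hpos : (0:ℝ) ≤ 1 / Real.sqrt (k : ℝ) := by positivity
        apply mul_le_mul_of_nonneg_left _ hpos
        linarith
    _ = 4 := by field_simp; ring

private lemma pointwise_bound {A B jr mr sN : ℝ} (hA : 0 ≤ A) (hB : 0 ≤ B)
    (hj1 : 1 ≤ jr) (hm1 : 1 ≤ mr) (hsN : 0 < sN) (hNj : sN ≤ Real.sqrt jr) :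
    A * B / (jr * mr) ≤ 1 / (2 * sN) *
      (A ^ 2 / (Real.sqrt jr * (mr * Real.sqrt mr)) + B ^ 2 / (Real.sqrt jr * Real.sqrt mr)) := by
  set sj := Real.sqrt jr with hsj
  set sm := Real.sqrt mr with hsm
  have hsjpos : 0 < sj := Real.sqrt_pos.2 (by linarith)
  have hsmpos : 0 < sm := Real.sqrt_pos.2 (by linarith)
  have hsj2 : sj ^ 2 = jr := Real.sq_sqrt (by linarith)
  have hsm2 : sm ^ 2 = mr := Real.sq_sqrt (by linarith)
  have hjrpos : 0 < jr := by linarith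
  have hmrpos : 0 < mr := by linarith
  have hd : sN * sj ≤ jr := by nlinarith
  have key1 : 2 * A * B * sm ≤ A ^ 2 + B ^ 2 * mr := by
    nlinarith [sq_nonneg (A - B * sm)]
  have expand : 1 / (2 * sN) * (A ^ 2 / (sj * (mr * sm)) + B ^ 2 / (sj * sm))
      = A ^ 2 / (2 * sN * sj * mr * sm) + B ^ 2 / (2 * sN * sj * sm) := by
    field_simp
  rw [expand]
  calc A * B / (jr * mr) ≤ (A ^ 2 + B ^ 2 * mr) / (2 * sm * jr * mr) := by
        rw [div_le_div_iff₀ (by positivity) (by positivity)]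
        nlinarith [mul_le_mul_of_nonneg_left key1 (by positivity : (0:ℝ) ≤ jr * mr)]
    _ = A ^ 2 / (2 * sm * jr * mr) + B ^ 2 / (2 * jr * sm) := by
        rw [← hsm2]
        field_simp
    _ ≤ A ^ 2 / (2 * sN * sj * mr * sm) + B ^ 2 / (2 * sN * sj * sm) := by
        have h1 : 2 * sN * sj * mr * sm ≤ 2 * sm * jr * mr := by nlinarith [mul_le_mul_of_nonneg_left hd (by positivity : (0:ℝ) ≤ 2 * sm * mr)]
        have h2 : 2 * sN * sj * sm ≤ 2 * jr * sm := by nlinarith [mul_le_mul_of_nonneg_left hd (by positivity : (0:ℝ) ≤ 2 * sm)]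
        gcongr <;> positivity

private lemma double_sum_bound (N : ℕ) (hN : 1 ≤ N) (F : Finset ℕ) (hF : ∀ n ∈ F, N ≤ n)
    (a : ℕ → ℝ) (ha : ∀ n, 0 ≤ a n) :
    ∑ p ∈ (F ×ˢ F).filter (fun p => p.1 < p.2),
        a p.1 * a p.2 / ((p.1 : ℝ) * ((p.2 - p.1 : ℕ) : ℝ))
      ≤ 7 / (2 * Real.sqrt (N : ℝ)) * ∑ n ∈ F, a n ^ 2 := by
  have hNpos : (0:ℝ) < (N : ℝ) := by exact_mod_cast hN
  have hsN : 0 < Real.sqrt (N : ℝ) := Real.sqrt_pos.2 hNpos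
  have hF1 : ∀ n ∈ F, 1 ≤ n := fun n hn => le_trans hN (hF n hn)
  -- pointwise bound
  have hpt : ∀ p ∈ (F ×ˢ F).filter (fun p : ℕ × ℕ => p.1 < p.2),
      a p.1 * a p.2 / ((p.1 : ℝ) * ((p.2 - p.1 : ℕ) : ℝ))
        ≤ 1 / (2 * Real.sqrt (N : ℝ)) *
          (a p.1 ^ 2 / (Real.sqrt (p.1 : ℝ) * (((p.2 - p.1 : ℕ) : ℝ) * Real.sqrt ((p.2 - p.1 : ℕ) : ℝ)))
           + a p.2 ^ 2 / (Real.sqrt (p.1 : ℝ) * Real.sqrt ((p.2 - p.1 : ℕ) : ℝ))) := by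
    intro p hp
    rw [Finset.mem_filter, Finset.mem_product] at hp
    obtain ⟨⟨h1, h2⟩, hlt⟩ := hp
    have hj1 : (1:ℝ) ≤ (p.1 : ℝ) := by exact_mod_cast hF1 _ h1
    have hm1 : (1:ℝ) ≤ ((p.2 - p.1 : ℕ) : ℝ) := by
      have : 1 ≤ p.2 - p.1 := by omega
      exact_mod_cast this
    have hNj : Real.sqrt (N : ℝ) ≤ Real.sqrt (p.1 : ℝ) := by
      apply Real.sqrt_le_sqrt; exact_mod_cast hF _ h1
    exact pointwise_bound (ha _) (ha _) hj1 hm1 hsN hNj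
  refine le_trans (Finset.sum_le_sum hpt) ?_
  rw [← Finset.mul_sum]
  have split : ∑ p ∈ (F ×ˢ F).filter (fun p : ℕ × ℕ => p.1 < p.2),
      (a p.1 ^ 2 / (Real.sqrt (p.1 : ℝ) * (((p.2 - p.1 : ℕ) : ℝ) * Real.sqrt ((p.2 - p.1 : ℕ) : ℝ)))
       + a p.2 ^ 2 / (Real.sqrt (p.1 : ℝ) * Real.sqrt ((p.2 - p.1 : ℕ) : ℝ)))
      ≤ 7 * ∑ n ∈ F, a n ^ 2 := by
    rw [Finset.sum_add_distrib]
    have hS1 : ∑ p ∈ (F ×ˢ F).filter (fun p : ℕ × ℕ => p.1 < p.2),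
        a p.1 ^ 2 / (Real.sqrt (p.1 : ℝ) * (((p.2 - p.1 : ℕ) : ℝ) * Real.sqrt ((p.2 - p.1 : ℕ) : ℝ)))
        ≤ 3 * ∑ n ∈ F, a n ^ 2 := by
      have hmono : ∀ p ∈ (F ×ˢ F).filter (fun p : ℕ × ℕ => p.1 < p.2),
          a p.1 ^ 2 / (Real.sqrt (p.1 : ℝ) * (((p.2 - p.1 : ℕ) : ℝ) * Real.sqrt ((p.2 - p.1 : ℕ) : ℝ)))
            ≤ a p.1 ^ 2 / (((p.2 - p.1 : ℕ) : ℝ) * Real.sqrt ((p.2 - p.1 : ℕ) : ℝ)) := by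
        intro p hp
        rw [Finset.mem_filter, Finset.mem_product] at hp
        obtain ⟨⟨h1, h2⟩, hlt⟩ := hp
        have hm1 : (1:ℝ) ≤ ((p.2 - p.1 : ℕ) : ℝ) := by
          have : 1 ≤ p.2 - p.1 := by omega
          exact_mod_cast this
        have hj1 : (1:ℝ) ≤ Real.sqrt (p.1 : ℝ) := by
          rw [show (1:ℝ) = Real.sqrt 1 from Real.sqrt_one.symm]
          exact Real.sqrt_le_sqrt (by exact_mod_cast hF1 _ h1)
        have hsm : (0:ℝ) < Real.sqrt ((p.2 - p.1 : ℕ) : ℝ) := Real.sqrt_pos.2 (by linarith)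
        have hjs : (0:ℝ) < Real.sqrt (p.1 : ℝ) := by linarith
        calc a p.1 ^ 2 / (Real.sqrt (p.1 : ℝ) * (((p.2 - p.1 : ℕ) : ℝ) * Real.sqrt ((p.2 - p.1 : ℕ) : ℝ)))
            = a p.1 ^ 2 / (((p.2 - p.1 : ℕ) : ℝ) * Real.sqrt ((p.2 - p.1 : ℕ) : ℝ)) * (1 / Real.sqrt (p.1 : ℝ)) := by
              rw [div_mul_div_comm, mul_one, mul_comm]
          _ ≤ a p.1 ^ 2 / (((p.2 - p.1 : ℕ) : ℝ) * Real.sqrt ((p.2 - p.1 : ℕ) : ℝ)) * 1 := by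
              apply mul_le_mul_of_nonneg_left _ (by positivity)
              rw [div_le_one hjs]
              exact hj1
          _ = a p.1 ^ 2 / (((p.2 - p.1 : ℕ) : ℝ) * Real.sqrt ((p.2 - p.1 : ℕ) : ℝ)) := mul_one _
      refine le_trans (Finset.sum_le_sum hmono) ?_
      rw [Finset.sum_filter, Finset.sum_product]
      have inner : ∀ j ∈ F, (∑ k ∈ F, if j < k then
          a j ^ 2 / (((k - j : ℕ) : ℝ) * Real.sqrt ((k - j : ℕ) : ℝ)) else 0) ≤ a j ^ 2 * 3 := by
        intro j hj
        have hrw : (∑ k ∈ F, if j < k then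
            a j ^ 2 / (((k - j : ℕ) : ℝ) * Real.sqrt ((k - j : ℕ) : ℝ)) else 0)
            = a j ^ 2 * ∑ k ∈ F, (if j < k then
              1 / (((k - j : ℕ) : ℝ) * Real.sqrt ((k - j : ℕ) : ℝ)) else 0) := by
          rw [Finset.mul_sum]
          refine Finset.sum_congr rfl fun k _ => ?_
          split
          · rw [mul_one_div]
          · rw [mul_zero]
        rw [hrw]
        apply mul_le_mul_of_nonneg_left _ (sq_nonneg _)
        rw [← Finset.sum_filter]
        set B := F.sup id + 1 with hB
        have hsub : F.filter (fun k => j < k) ⊆ Finset.Ico (j + 1) (j + 1 + B) := by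
          intro k hk
          rw [Finset.mem_filter] at hk
          rw [Finset.mem_Ico]
          have hle : k ≤ F.sup id := Finset.le_sup (f := id) hk.1
          omega
        refine le_trans (Finset.sum_le_sum_of_subset_of_nonneg hsub
          (fun k _ _ => by positivity)) ?_
        rw [Finset.sum_Ico_eq_sum_range]
        have hcg : ∀ i ∈ Finset.range (j + 1 + B - (j + 1)),
            1 / (((j + 1 + i - j : ℕ) : ℝ) * Real.sqrt ((j + 1 + i - j : ℕ) : ℝ))
              = 1 / (((i : ℝ) + 1) * Real.sqrt ((i : ℝ) + 1)) := by
          intro i _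
          have hq : j + 1 + i - j = i + 1 := by omega
          rw [hq]
          push_cast
          ring_nf
        rw [Finset.sum_congr rfl hcg]
        exact sum_inv_pow32 _
      calc (∑ j ∈ F, ∑ k ∈ F, if j < k then
              a j ^ 2 / (((k - j : ℕ) : ℝ) * Real.sqrt ((k - j : ℕ) : ℝ)) else 0)
          ≤ ∑ j ∈ F, a j ^ 2 * 3 := Finset.sum_le_sum inner
        _ = 3 * ∑ n ∈ F, a n ^ 2 := by rw [← Finset.sum_mul]; ring
    have hS2 : ∑ p ∈ (F ×ˢ F).filter (fun p : ℕ × ℕ => p.1 < p.2),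
        a p.2 ^ 2 / (Real.sqrt (p.1 : ℝ) * Real.sqrt ((p.2 - p.1 : ℕ) : ℝ))
        ≤ 4 * ∑ n ∈ F, a n ^ 2 := by
      rw [Finset.sum_filter, Finset.sum_product, Finset.sum_comm]
      have inner : ∀ k ∈ F, (∑ j ∈ F, if j < k then
          a k ^ 2 / (Real.sqrt (j : ℝ) * Real.sqrt ((k - j : ℕ) : ℝ)) else 0) ≤ a k ^ 2 * 4 := by
        intro k hk
        have hrw : (∑ j ∈ F, if j < k then
            a k ^ 2 / (Real.sqrt (j : ℝ) * Real.sqrt ((k - j : ℕ) : ℝ)) else 0)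
            = a k ^ 2 * ∑ j ∈ F, (if j < k then
              1 / (Real.sqrt (j : ℝ) * Real.sqrt ((k - j : ℕ) : ℝ)) else 0) := by
          rw [Finset.mul_sum]
          refine Finset.sum_congr rfl fun j _ => ?_
          split
          · rw [mul_one_div]
          · rw [mul_zero]
        rw [hrw]
        apply mul_le_mul_of_nonneg_left _ (sq_nonneg _)
        rw [← Finset.sum_filter]
        have hsub : F.filter (fun j => j < k) ⊆ Finset.Ico 1 k := by
          intro j hj
          rw [Finset.mem_filter] at hj
          rw [Finset.mem_Ico]
          exact ⟨hF1 _ hj.1, hj.2⟩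
        refine le_trans (Finset.sum_le_sum_of_subset_of_nonneg hsub
          (fun j _ _ => by positivity)) (conv_bound k)
      calc (∑ k ∈ F, ∑ j ∈ F, if j < k then
              a k ^ 2 / (Real.sqrt (j : ℝ) * Real.sqrt ((k - j : ℕ) : ℝ)) else 0)
          ≤ ∑ k ∈ F, a k ^ 2 * 4 := Finset.sum_le_sum inner
        _ = 4 * ∑ n ∈ F, a n ^ 2 := by rw [← Finset.sum_mul]; ring
    linarith
  calc 1 / (2 * Real.sqrt (N : ℝ)) * ∑ p ∈ (F ×ˢ F).filter (fun p : ℕ × ℕ => p.1 < p.2), _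
      ≤ 1 / (2 * Real.sqrt (N : ℝ)) * (7 * ∑ n ∈ F, a n ^ 2) := by
        apply mul_le_mul_of_nonneg_left split (by positivity)
    _ = 7 / (2 * Real.sqrt (N : ℝ)) * ∑ n ∈ F, a n ^ 2 := by ring

private lemma offdiag_bound {S : Type*} [NormedAddCommGroup S] [InnerProductSpace ℂ S]
    (C₂ : ℝ) (hC₂ : 0 < C₂) (U : ℕ → S)
    (hbU : ∀ j k : ℕ, 1 ≤ j → j < k →
      ‖(inner ℂ (U j) (U k) : ℂ)‖ ≤ C₂ * ‖U j‖ * ‖U k‖ / ((j : ℝ) * ((k - j : ℕ) : ℝ)))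
    (N : ℕ) (hN : 1 ≤ N) (F : Finset ℕ) (hF : ∀ n ∈ F, N ≤ n) :
    |‖∑ n ∈ F, U n‖ ^ 2 - ∑ n ∈ F, ‖U n‖ ^ 2|
      ≤ 7 * C₂ / Real.sqrt (N : ℝ) * ∑ n ∈ F, ‖U n‖ ^ 2 := by
  have hNpos : (0:ℝ) < (N : ℝ) := by exact_mod_cast hN
  have hsN : 0 < Real.sqrt (N : ℝ) := Real.sqrt_pos.2 hNpos
  have hF1 : ∀ n ∈ F, 1 ≤ n := fun n hn => le_trans hN (hF n hn)
  set f : ℕ × ℕ → ℝ := fun p => RCLike.re (inner ℂ (U p.1) (U p.2) : ℂ) with hf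
  have h1 : (inner ℂ (∑ n ∈ F, U n) (∑ n ∈ F, U n) : ℂ)
      = ∑ p ∈ F ×ˢ F, (inner ℂ (U p.1) (U p.2) : ℂ) := by
    rw [sum_inner, Finset.sum_product]
    exact Finset.sum_congr rfl fun j _ => inner_sum _ _ _
  have expand : ‖∑ n ∈ F, U n‖ ^ 2 = ∑ p ∈ F ×ˢ F, f p := by
    rw [← inner_self_eq_norm_sq (𝕜 := ℂ), h1, map_sum]
  have hdiag : ∑ p ∈ (F ×ˢ F).filter (fun p : ℕ × ℕ => p.1 = p.2), f p
      = ∑ n ∈ F, ‖U n‖ ^ 2 := by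
    refine Finset.sum_nbij' (fun p => p.1) (fun n => (n, n)) ?_ ?_ ?_ ?_ ?_
    · intro p hp
      rw [Finset.mem_filter, Finset.mem_product] at hp
      exact hp.1.1
    · intro n hn
      rw [Finset.mem_filter, Finset.mem_product]
      exact ⟨⟨hn, hn⟩, rfl⟩
    · intro p hp
      rw [Finset.mem_filter, Finset.mem_product] at hp
      exact Prod.ext rfl hp.2
    · intro n hn
      rfl
    · intro p hp
      rw [Finset.mem_filter, Finset.mem_product] at hp
      show RCLike.re (inner ℂ (U p.1) (U p.2) : ℂ) = ‖U p.1‖ ^ 2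
      rw [← hp.2]
      exact inner_self_eq_norm_sq (𝕜 := ℂ) (U p.1)
  have hsplit : ‖∑ n ∈ F, U n‖ ^ 2 - ∑ n ∈ F, ‖U n‖ ^ 2
      = ∑ p ∈ (F ×ˢ F).filter (fun p : ℕ × ℕ => ¬ p.1 = p.2), f p := by
    rw [expand, ← Finset.sum_filter_add_sum_filter_not (F ×ˢ F)
      (fun p : ℕ × ℕ => p.1 = p.2) f, hdiag]
    ring
  rw [hsplit]
  -- bound the off-diagonal sum
  have habs : |∑ p ∈ (F ×ˢ F).filter (fun p : ℕ × ℕ => ¬ p.1 = p.2), f p|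
      ≤ ∑ p ∈ (F ×ˢ F).filter (fun p : ℕ × ℕ => ¬ p.1 = p.2),
          ‖(inner ℂ (U p.1) (U p.2) : ℂ)‖ := by
    refine le_trans (Finset.abs_sum_le_sum_abs _ _) (Finset.sum_le_sum fun p _ => ?_)
    exact RCLike.abs_re_le_norm _
  refine le_trans habs ?_
  have hsplit2 : ∑ p ∈ (F ×ˢ F).filter (fun p : ℕ × ℕ => ¬ p.1 = p.2),
        ‖(inner ℂ (U p.1) (U p.2) : ℂ)‖
      = (∑ p ∈ (F ×ˢ F).filter (fun p : ℕ × ℕ => p.1 < p.2), ‖(inner ℂ (U p.1) (U p.2) : ℂ)‖)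
        + ∑ p ∈ (F ×ˢ F).filter (fun p : ℕ × ℕ => p.2 < p.1), ‖(inner ℂ (U p.1) (U p.2) : ℂ)‖ := by
    rw [Finset.sum_filter, Finset.sum_filter, Finset.sum_filter, ← Finset.sum_add_distrib]
    refine Finset.sum_congr rfl fun p _ => ?_
    rcases lt_trichotomy p.1 p.2 with h | h | h
    · simp [h, h.ne, lt_asymm h]
    · simp [h]
    · simp [h, h.ne', lt_asymm h]
  have hswap : ∑ p ∈ (F ×ˢ F).filter (fun p : ℕ × ℕ => p.2 < p.1),
        ‖(inner ℂ (U p.1) (U p.2) : ℂ)‖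
      = ∑ p ∈ (F ×ˢ F).filter (fun p : ℕ × ℕ => p.1 < p.2),
        ‖(inner ℂ (U p.1) (U p.2) : ℂ)‖ := by
    refine Finset.sum_nbij' (fun p => (p.2, p.1)) (fun p => (p.2, p.1)) ?_ ?_ ?_ ?_ ?_
    · intro p hp
      rw [Finset.mem_filter, Finset.mem_product] at *
      exact ⟨⟨hp.1.2, hp.1.1⟩, hp.2⟩
    · intro p hp
      rw [Finset.mem_filter, Finset.mem_product] at *
      exact ⟨⟨hp.1.2, hp.1.1⟩, hp.2⟩
    · intro p _; rfl
    · intro p _; rfl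
    · intro p _
      exact norm_inner_symm (U p.1) (U p.2)
  rw [hsplit2, hswap]
  have hlt : ∑ p ∈ (F ×ˢ F).filter (fun p : ℕ × ℕ => p.1 < p.2),
        ‖(inner ℂ (U p.1) (U p.2) : ℂ)‖
      ≤ C₂ * ∑ p ∈ (F ×ˢ F).filter (fun p : ℕ × ℕ => p.1 < p.2),
          ‖U p.1‖ * ‖U p.2‖ / ((p.1 : ℝ) * ((p.2 - p.1 : ℕ) : ℝ)) := by
    rw [Finset.mul_sum]
    refine Finset.sum_le_sum fun p hp => ?_
    rw [Finset.mem_filter, Finset.mem_product] at hp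
    have := hbU p.1 p.2 (hF1 _ hp.1.1) hp.2
    calc ‖(inner ℂ (U p.1) (U p.2) : ℂ)‖
        ≤ C₂ * ‖U p.1‖ * ‖U p.2‖ / ((p.1 : ℝ) * ((p.2 - p.1 : ℕ) : ℝ)) := this
      _ = C₂ * (‖U p.1‖ * ‖U p.2‖ / ((p.1 : ℝ) * ((p.2 - p.1 : ℕ) : ℝ))) := by ring
  have hds := double_sum_bound N hN F hF (fun n => ‖U n‖) (fun n => norm_nonneg _)
  calc (∑ p ∈ (F ×ˢ F).filter (fun p : ℕ × ℕ => p.1 < p.2), ‖(inner ℂ (U p.1) (U p.2) : ℂ)‖)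
        + ∑ p ∈ (F ×ˢ F).filter (fun p : ℕ × ℕ => p.1 < p.2), ‖(inner ℂ (U p.1) (U p.2) : ℂ)‖
      ≤ (C₂ * ∑ p ∈ (F ×ˢ F).filter (fun p : ℕ × ℕ => p.1 < p.2),
          ‖U p.1‖ * ‖U p.2‖ / ((p.1 : ℝ) * ((p.2 - p.1 : ℕ) : ℝ)))
        + C₂ * ∑ p ∈ (F ×ˢ F).filter (fun p : ℕ × ℕ => p.1 < p.2),
          ‖U p.1‖ * ‖U p.2‖ / ((p.1 : ℝ) * ((p.2 - p.1 : ℕ) : ℝ)) := by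
        exact add_le_add hlt hlt
    _ ≤ (C₂ * (7 / (2 * Real.sqrt (N : ℝ)) * ∑ n ∈ F, ‖U n‖ ^ 2))
        + C₂ * (7 / (2 * Real.sqrt (N : ℝ)) * ∑ n ∈ F, ‖U n‖ ^ 2) := by
        have := mul_le_mul_of_nonneg_left hds (le_of_lt hC₂)
        exact add_le_add this this
    _ = 7 * C₂ / Real.sqrt (N : ℝ) * ∑ n ∈ F, ‖U n‖ ^ 2 := by
        field_simp
        ring

/-- Almost-orthogonality estimate for the Riesz basis construction: if the
blocks `S'_n = span{Φ_{2n+1}, Φ_{2n+2}}` satisfy the uniform two-vector Riesz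
estimate (a) and the almost-orthogonality bound (b), then for every square
summable block sequence `U_n ∈ S'_n` the series `Σ U_n` converges and the tail
sums are almost orthogonal. -/
theorem almost_orthogonality
    {S : Type*} [NormedAddCommGroup S] [InnerProductSpace ℂ S] [CompleteSpace S]
    (Φ : ℕ → S) (S' : ℕ → Submodule ℂ S)
    (hspan : ∀ n : ℕ, 1 ≤ n → S' n = Submodule.span ℂ {Φ (2 * n + 1), Φ (2 * n + 2)})
    (C₁ : ℝ) (hC₁ : 1 ≤ C₁)
    (ha : ∀ n : ℕ, 1 ≤ n → ∀ u v : ℂ,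
      C₁⁻¹ * (‖u‖ ^ 2 + ‖v‖ ^ 2) ≤ ‖u • Φ (2 * n + 1) + v • Φ (2 * n + 2)‖ ^ 2
      ∧ ‖u • Φ (2 * n + 1) + v • Φ (2 * n + 2)‖ ^ 2 ≤ C₁ * (‖u‖ ^ 2 + ‖v‖ ^ 2))
    (C₂ : ℝ) (hC₂ : 0 < C₂)
    (hb : ∀ n m : ℕ, 1 ≤ n → 1 ≤ m → ∀ Un ∈ S' n, ∀ Um ∈ S' (n + m),
      ‖(inner ℂ Un Um : ℂ)‖ ≤ C₂ * ‖Un‖ * ‖Um‖ / ((n : ℝ) * m)) :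
    ∃ C₂' > 0, ∀ U : ℕ → S, (∀ n, U n ∈ S' n) → U 0 = 0 →
      Summable (fun n => ‖U n‖ ^ 2) →
      Summable U
      ∧ ∀ N : ℕ, 1 ≤ N →
        |‖∑' n, (if N ≤ n then U n else 0)‖ ^ 2
            - ∑' n, (if N ≤ n then ‖U n‖ ^ 2 else 0)|
          ≤ C₂' * Real.sqrt (∑' n, (if N ≤ n then (1 : ℝ) / (n : ℝ) ^ 2 else 0))
              * ∑' n, (if N ≤ n then ‖U n‖ ^ 2 else 0) := by
  refine ⟨14 * C₂, by positivity, ?_⟩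
  intro U hU hU0 hsum
  have hbU : ∀ j k : ℕ, 1 ≤ j → j < k →
      ‖(inner ℂ (U j) (U k) : ℂ)‖ ≤ C₂ * ‖U j‖ * ‖U k‖ / ((j : ℝ) * ((k - j : ℕ) : ℝ)) := by
    intro j k hj hjk
    have hm : 1 ≤ k - j := by omega
    have hUk : U k ∈ S' (j + (k - j)) := by
      rw [Nat.add_sub_cancel' (le_of_lt hjk)]
      exact hU k
    exact hb j (k - j) hj hm (U j) (hU j) (U k) hUk
  -- Summability of U
  have hsummable : Summable U := by
    rw [summable_iff_vanishing_norm]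
    intro ε hε
    obtain ⟨s, hs⟩ := summable_iff_vanishing_norm.1 hsum (ε ^ 2 / (1 + 7 * C₂)) (by positivity)
    refine ⟨s ∪ Finset.range 1, fun t ht => ?_⟩
    rw [Finset.disjoint_union_right] at ht
    have ht1 : ∀ n ∈ t, 1 ≤ n := by
      intro n hn
      rcases Nat.eq_zero_or_pos n with rfl | h
      · exact absurd hn (Finset.disjoint_right.1 ht.2 (by simp))
      · exact h
    have hb2 := offdiag_bound C₂ hC₂ U hbU 1 le_rfl t ht1
    rw [Nat.cast_one, Real.sqrt_one, div_one] at hb2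
    have hnn : (0:ℝ) ≤ ∑ n ∈ t, ‖U n‖ ^ 2 :=
      Finset.sum_nonneg fun n _ => by positivity
    have h3 : ∑ n ∈ t, ‖U n‖ ^ 2 < ε ^ 2 / (1 + 7 * C₂) := by
      have := hs t ht.1
      rwa [Real.norm_eq_abs, abs_of_nonneg hnn] at this
    have h1 : ‖∑ n ∈ t, U n‖ ^ 2 < ε ^ 2 := by
      have h2 := (abs_le.1 hb2).2
      have hlt : (1 + 7 * C₂) * ∑ n ∈ t, ‖U n‖ ^ 2 < ε ^ 2 := by
        have := mul_lt_mul_of_pos_left h3 (by positivity : (0:ℝ) < 1 + 7 * C₂)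
        calc (1 + 7 * C₂) * ∑ n ∈ t, ‖U n‖ ^ 2
            < (1 + 7 * C₂) * (ε ^ 2 / (1 + 7 * C₂)) := this
          _ = ε ^ 2 := by field_simp
      nlinarith
    nlinarith [norm_nonneg (∑ n ∈ t, U n), hε]
  refine ⟨hsummable, ?_⟩
  intro N hN
  have hNpos : (0:ℝ) < (N : ℝ) := by exact_mod_cast hN
  have hsN : 0 < Real.sqrt (N : ℝ) := Real.sqrt_pos.2 hNpos
  -- summability of the three tail series
  have hqsumm : Summable (fun n => if N ≤ n then ‖U n‖ ^ 2 else 0) := by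
    refine Summable.of_nonneg_of_le (fun n => ?_) (fun n => ?_) hsum
    · split <;> positivity
    · split
      · exact le_rfl
      · positivity
  have hgsumm : Summable (fun n => if N ≤ n then U n else 0) := by
    have h := hsummable.indicator {n : ℕ | N ≤ n}
    refine h.congr fun n => ?_
    by_cases hc : N ≤ n <;> simp [Set.indicator_apply, Set.mem_setOf_eq, hc]
  have hwsumm : Summable (fun n : ℕ => if N ≤ n then (1:ℝ) / (n:ℝ) ^ 2 else 0) := by
    have base : Summable (fun n : ℕ => (1:ℝ) / (n:ℝ) ^ 2) :=
      Real.summable_one_div_nat_pow.2 (by norm_num)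
    refine Summable.of_nonneg_of_le (fun n => ?_) (fun n => ?_) base
    · split <;> positivity
    · split
      · exact le_rfl
      · positivity
  set Ta := ∑' n, (if N ≤ n then ‖U n‖ ^ 2 else 0) with hTa
  set D := ∑' n, (if N ≤ n then (1:ℝ) / (n:ℝ) ^ 2 else 0) with hD
  have hTann : 0 ≤ Ta := tsum_nonneg fun n => by split <;> positivity
  -- lower bound for D
  have hDge : 1 / (4 * (N:ℝ)) ≤ D := by
    have hcard : (Finset.Ico N (2 * N)).card = N := by
      rw [Nat.card_Ico]; omega
    have hconst : ∑ _n ∈ Finset.Ico N (2 * N), (1 / (4 * (N:ℝ) ^ 2)) = 1 / (4 * (N:ℝ)) := by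
      rw [Finset.sum_const, hcard, nsmul_eq_mul]
      field_simp
    have hterm : ∀ n ∈ Finset.Ico N (2 * N),
        (1 / (4 * (N:ℝ) ^ 2)) ≤ (if N ≤ n then (1:ℝ) / (n:ℝ) ^ 2 else 0) := by
      intro n hn
      rw [Finset.mem_Ico] at hn
      rw [if_pos hn.1]
      have h1 : (0:ℝ) < (n:ℝ) := by
        have : 1 ≤ n := le_trans hN hn.1
        exact_mod_cast this
      have h2 : (n:ℝ) ≤ 2 * (N:ℝ) := by
        have : n ≤ 2 * N := le_of_lt hn.2
        exact_mod_cast this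
      apply one_div_le_one_div_of_le (by positivity)
      nlinarith
    calc 1 / (4 * (N:ℝ)) = ∑ _n ∈ Finset.Ico N (2 * N), (1 / (4 * (N:ℝ) ^ 2)) := hconst.symm
      _ ≤ ∑ n ∈ Finset.Ico N (2 * N), (if N ≤ n then (1:ℝ) / (n:ℝ) ^ 2 else 0) :=
          Finset.sum_le_sum hterm
      _ ≤ D := Summable.sum_le_tsum _ (fun n _ => by split <;> positivity) hwsumm
  have hsqrtD : 1 / Real.sqrt (N:ℝ) ≤ 2 * Real.sqrt D := by
    have h1 : Real.sqrt (1 / (4 * (N:ℝ))) ≤ Real.sqrt D := Real.sqrt_le_sqrt hDge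
    have h4N : Real.sqrt (4 * (N:ℝ)) = 2 * Real.sqrt (N:ℝ) := by
      rw [show (4:ℝ) * (N:ℝ) = (2:ℝ) ^ 2 * (N:ℝ) by ring,
        Real.sqrt_mul (by positivity) _, Real.sqrt_sq (by norm_num)]
    have h2 : Real.sqrt (1 / (4 * (N:ℝ))) = 1 / (2 * Real.sqrt (N:ℝ)) := by
      rw [one_div, Real.sqrt_inv, h4N, one_div]
    rw [h2] at h1
    rw [div_le_iff₀ hsN]
    rw [div_le_iff₀ (by positivity : (0:ℝ) < 2 * Real.sqrt (N:ℝ))] at h1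
    nlinarith [Real.sqrt_nonneg D, hsN]
  -- finite-sum estimate, uniform in M
  have key : ∀ M : ℕ,
      |‖∑ n ∈ Finset.Ico N M, U n‖ ^ 2 - ∑ n ∈ Finset.Ico N M, ‖U n‖ ^ 2|
        ≤ 14 * C₂ * Real.sqrt D * Ta := by
    intro M
    have hF : ∀ n ∈ Finset.Ico N M, N ≤ n := fun n hn => (Finset.mem_Ico.1 hn).1
    have h1 := offdiag_bound C₂ hC₂ U hbU N hN (Finset.Ico N M) hF
    have hFT : ∑ n ∈ Finset.Ico N M, ‖U n‖ ^ 2 ≤ Ta := by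
      have he : ∑ n ∈ Finset.Ico N M, ‖U n‖ ^ 2
          = ∑ n ∈ Finset.Ico N M, (if N ≤ n then ‖U n‖ ^ 2 else 0) := by
        refine Finset.sum_congr rfl fun n hn => ?_
        rw [if_pos (hF n hn)]
      rw [he, hTa]
      exact Summable.sum_le_tsum _ (fun n _ => by split <;> positivity) hqsumm
    have hFnn : (0:ℝ) ≤ ∑ n ∈ Finset.Ico N M, ‖U n‖ ^ 2 :=
      Finset.sum_nonneg fun n _ => by positivity
    calc |‖∑ n ∈ Finset.Ico N M, U n‖ ^ 2 - ∑ n ∈ Finset.Ico N M, ‖U n‖ ^ 2|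
        ≤ 7 * C₂ / Real.sqrt (N:ℝ) * ∑ n ∈ Finset.Ico N M, ‖U n‖ ^ 2 := h1
      _ = 7 * C₂ * (1 / Real.sqrt (N:ℝ)) * ∑ n ∈ Finset.Ico N M, ‖U n‖ ^ 2 := by ring
      _ ≤ 7 * C₂ * (2 * Real.sqrt D) * ∑ n ∈ Finset.Ico N M, ‖U n‖ ^ 2 := by
          apply mul_le_mul_of_nonneg_right _ hFnn
          exact mul_le_mul_of_nonneg_left hsqrtD (by positivity)
      _ = 14 * C₂ * Real.sqrt D * ∑ n ∈ Finset.Ico N M, ‖U n‖ ^ 2 := by ring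
      _ ≤ 14 * C₂ * Real.sqrt D * Ta := by
          apply mul_le_mul_of_nonneg_left hFT (by positivity)
  -- pass to the limit
  have hfilter : ∀ M : ℕ, (Finset.range M).filter (fun n => N ≤ n) = Finset.Ico N M := by
    intro M
    ext n
    simp only [Finset.mem_filter, Finset.mem_range, Finset.mem_Ico]
    exact ⟨fun h => ⟨h.2, h.1⟩, fun h => ⟨h.2, h.1⟩⟩
  have htU : Tendsto (fun M => ∑ n ∈ Finset.Ico N M, U n) atTop
      (𝓝 (∑' n, (if N ≤ n then U n else 0))) := by
    have h := hgsumm.hasSum.tendsto_sum_nat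
    refine h.congr fun M => ?_
    rw [← hfilter M, Finset.sum_filter]
  have htq : Tendsto (fun M => ∑ n ∈ Finset.Ico N M, ‖U n‖ ^ 2) atTop (𝓝 Ta) := by
    have h := hqsumm.hasSum.tendsto_sum_nat
    refine h.congr fun M => ?_
    rw [← hfilter M, Finset.sum_filter]
  have hfin : Tendsto
      (fun M => |‖∑ n ∈ Finset.Ico N M, U n‖ ^ 2 - ∑ n ∈ Finset.Ico N M, ‖U n‖ ^ 2|)
      atTop (𝓝 |‖∑' n, (if N ≤ n then U n else 0)‖ ^ 2 - Ta|) :=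
    (((htU.norm.pow 2).sub htq).abs)
  exact le_of_tendsto hfin (Eventually.of_forall key)
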